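/- Let η₁, η₂, η₃, η₄, η₅ ∈ (0,1) satisfy the two chains of equalities: η₃/(1-η₃) = η₁/((1-η₄)(1-η₁)) = η₅/(1-η₅) + η₁/((1-η₅)(1-η₁)), and η₂/((1-η₃)(1-η₂)) = η₄/(1-η₄) = η₅/(1-η₅) + η₂/((1-η₅)(1-η₂)). Then η₃ = η₁/(1-η₂), η₄ = η₂/(1-η₁), and η₅ = η₁η₂/((1-η₁)(1-η₂)). -/

import Mathlib

/-- Algebraic core of the decomposition relations for non-chiral edges: matching
coefficients in three decompositions yields the cross-ratio decomposition rules. -/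
theorem stmt14 (η₁ η₂ η₃ η₄ η₅ : ℝ)
    (h₁ : η₁ ∈ Set.Ioo (0 : ℝ) 1) (h₂ : η₂ ∈ Set.Ioo (0 : ℝ) 1)
    (h₃ : η₃ ∈ Set.Ioo (0 : ℝ) 1) (h₄ : η₄ ∈ Set.Ioo (0 : ℝ) 1)
    (h₅ : η₅ ∈ Set.Ioo (0 : ℝ) 1)
    (ha1 : η₃ / (1 - η₃) = η₁ / ((1 - η₄) * (1 - η₁)))
    (ha2 : η₁ / ((1 - η₄) * (1 - η₁)) = η₅ / (1 - η₅) + η₁ / ((1 - η₅) * (1 - η₁)))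
    (hb1 : η₂ / ((1 - η₃) * (1 - η₂)) = η₄ / (1 - η₄))
    (hb2 : η₄ / (1 - η₄) = η₅ / (1 - η₅) + η₂ / ((1 - η₅) * (1 - η₂))) :
    η₃ = η₁ / (1 - η₂) ∧ η₄ = η₂ / (1 - η₁) ∧ η₅ = η₁ * η₂ / ((1 - η₁) * (1 - η₂)) := by
  obtain ⟨p1, q1⟩ := h₁; obtain ⟨p2, q2⟩ := h₂; obtain ⟨p3, q3⟩ := h₃
  obtain ⟨p4, q4⟩ := h₄; obtain ⟨p5, q5⟩ := h₅
  have n1 : (1 - η₁) ≠ 0 := by linarith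
  have n2 : (1 - η₂) ≠ 0 := by linarith
  have n3 : (1 - η₃) ≠ 0 := by linarith
  have n4 : (1 - η₄) ≠ 0 := by linarith
  have n5 : (1 - η₅) ≠ 0 := by linarith
  have F1 := ha1.trans ha2
  have F2 := hb1.trans hb2
  field_simp at F1 F2 hb1
  have G1 : η₃ = η₁ + η₅ - η₁ * η₅ := by
    have key : (1 - η₅) * (η₃ - (η₁ + η₅ - η₁ * η₅)) = 0 := by linear_combination (1 - η₅) * F1
    rcases mul_eq_zero.mp key with h | h
    · exact absurd h n5
    · linarith
  have G2 : η₁ * η₂ = η₅ * ((1 - η₁) * (1 - η₂)) := by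
    have key : (1 - η₅) * (1 - η₂) * ((1 - η₅) * (η₁ * η₂ - η₅ * ((1 - η₁) * (1 - η₂)))) = 0 := by
      linear_combination (1 - η₅) * (1 - η₂) * (F2 - (η₅ * (1 - η₂) + η₂) * G1)
    rcases mul_eq_zero.mp key with h | h
    · rcases mul_eq_zero.mp h with h' | h'
      · exact absurd h' n5
      · exact absurd h' n2
    · rcases mul_eq_zero.mp h with h' | h'
      · exact absurd h' n5
      · linarith
  have G3 : η₃ * (1 - η₂) = η₁ := by linear_combination (1 - η₂) * G1 - G2
  have G4 : η₄ * (1 - η₁) = η₂ := by linear_combination -hb1 + η₄ * G3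
  refine ⟨?_, ?_, ?_⟩
  · field_simp; linear_combination G3
  · field_simp; linear_combination G4
  · field_simp; linear_combination -G2
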